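/- arXiv:1701.05973 — 5 statements merged into one kernel-verified Lean document; each statement's English description precedes it below -/
import Mathlib

section
/- For constants $a > 0$ and $\mu > 0$, the equation $e^{\mu \lambda} = e^{a\mu}(\mu\lambda + 1)$ has a unique positive solution $\lambda$, and this solution satisfies $\lambda > a$. -/
open Real

/-- For constants `a > 0` and `μ > 0`, the equation `e^{μλ} = e^{aμ}(μλ + 1)` has a
unique positive solution `λ`, and this solution satisfies `λ > a`. -/
theorem stmt_0 (a μ : ℝ) (ha : 0 < a) (hμ : 0 < μ) :
    (∃! lam : ℝ, 0 < lam ∧ Real.exp (μ * lam) = Real.exp (a * μ) * (μ * lam + 1)) ∧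
    (∀ lam : ℝ, 0 < lam → Real.exp (μ * lam) = Real.exp (a * μ) * (μ * lam + 1) → a < lam) := by
  set c := Real.exp (a * μ) with hc
  have hcpos : 0 < c := Real.exp_pos _
  have hc1 : a * μ + 1 ≤ c := Real.add_one_le_exp _
  -- Part 2: any positive solution is > a
  have hgt : ∀ lam : ℝ, 0 < lam → Real.exp (μ * lam) = c * (μ * lam + 1) → a < lam := by
    intro lam hl heq
    by_contra h
    push_neg at h
    have h1 : Real.exp (μ * lam) ≤ c := by
      rw [hc]
      exact Real.exp_le_exp.mpr (by nlinarith)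
    nlinarith [heq, mul_pos hcpos (mul_pos hμ hl)]
  -- Existence
  set b : ℝ := (8 * c + 1) / μ with hb
  have hab : a < b := by
    rw [hb, lt_div_iff₀ hμ]
    nlinarith
  have hμb : μ * b = 8 * c + 1 := by
    rw [hb]; field_simp
  have hexpb : c * (μ * b + 1) < Real.exp (μ * b) := by
    have h2 : 1 + (8 * c + 1) / 2 ≤ Real.exp ((8 * c + 1) / 2) := by
      have := Real.add_one_le_exp ((8 * c + 1) / 2); linarith
    have h3 : (1 + (8 * c + 1) / 2) ^ 2 ≤ Real.exp (8 * c + 1) := by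
      have := Real.exp_nonneg ((8 * c + 1) / 2)
      calc (1 + (8 * c + 1) / 2) ^ 2 ≤ Real.exp ((8 * c + 1) / 2) ^ 2 := by nlinarith
        _ = Real.exp (8 * c + 1) := by rw [sq, ← Real.exp_add]; ring_nf
    rw [hμb]
    nlinarith
  have hfa : Real.exp (μ * a) - c * (μ * a + 1) < 0 := by
    have : Real.exp (μ * a) = c := by rw [hc, mul_comm]
    nlinarith [mul_pos (mul_pos hcpos ha) hμ]
  have hcont : ContinuousOn (fun x => Real.exp (μ * x) - c * (μ * x + 1)) (Set.Icc a b) :=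
    (Continuous.sub (Real.continuous_exp.comp (continuous_const.mul continuous_id))
      (continuous_const.mul ((continuous_const.mul continuous_id).add continuous_const))).continuousOn
  have hivt := intermediate_value_Icc (le_of_lt hab) hcont
  have h0mem : (0 : ℝ) ∈ Set.Icc (Real.exp (μ * a) - c * (μ * a + 1))
      (Real.exp (μ * b) - c * (μ * b + 1)) := ⟨le_of_lt hfa, by linarith⟩
  obtain ⟨lam, hlmem, hflam⟩ := hivt h0mem
  have hlam_pos : 0 < lam := lt_of_lt_of_le ha hlmem.1
  have hlam_eq : Real.exp (μ * lam) = c * (μ * lam + 1) := by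
    have : Real.exp (μ * lam) - c * (μ * lam + 1) = 0 := hflam
    linarith
  -- Uniqueness
  have huniq : ∀ x y : ℝ, 0 < x → Real.exp (μ * x) = c * (μ * x + 1) →
      0 < y → Real.exp (μ * y) = c * (μ * y + 1) → x = y := by
    intro x y hx hex hy hey
    by_contra hne
    wlog hxy : x < y generalizing x y
    · exact this y x hy hey hx hex (Ne.symm hne) (lt_of_le_of_ne (not_lt.mp hxy) (Ne.symm hne))
    have hax : a < x := hgt x hx hex
    have hcx : c < Real.exp (μ * x) := by
      rw [hc]; exact Real.exp_lt_exp.mpr (by nlinarith)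
    have hsplit : Real.exp (μ * y) = Real.exp (μ * x) * Real.exp (μ * (y - x)) := by
      rw [← Real.exp_add]; ring_nf
    have hexp1 : μ * (y - x) + 1 < Real.exp (μ * (y - x)) :=
      Real.add_one_lt_exp (ne_of_gt (mul_pos hμ (sub_pos.mpr hxy)))
    nlinarith [Real.exp_pos (μ * (y - x)), mul_pos hμ (sub_pos.mpr hxy)]
  exact ⟨⟨lam, ⟨hlam_pos, hlam_eq⟩, fun y hy => huniq y lam hy.1 hy.2 hlam_pos hlam_eq⟩, hgt⟩
end

section
/- Let $a, \mu, t > 0$ and consider the function $g(\ell) = \ell(1 - e^{-\frac{\mu}{\ell}(t - a\ell)})$ on $\ell \in (0, t/a]$. Then $g$ is concave in $\ell$ (its second derivative is $-e^{-\frac{\mu}{\ell}(t-a\ell)} \frac{\mu^2 t^2}{\ell^3} < 0$), and hence the critical point $\ell^* = t/\lambda$, where $\lambda$ solves $e^{\mu\lambda} = e^{a\mu}(\mu\lambda + 1)$, is the global maximizer of $g$. -/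
open Real

private lemma exp_arg_eq (a μ t : ℝ) {l : ℝ} (hl : l ≠ 0) :
    -(μ / l) * (t - a * l) = a * μ - μ * t * l⁻¹ := by
  field_simp
  ring

/-- The function rewritten without division inside the exponent multiplier. -/
private lemma fun_eq (a μ t : ℝ) :
    (fun l : ℝ => l * (1 - Real.exp (-(μ / l) * (t - a * l))))
      = fun l : ℝ => l - l * Real.exp (a * μ - μ * t * l⁻¹) := by
  funext l
  by_cases hl : l = 0
  · simp [hl]
  · rw [exp_arg_eq a μ t hl]; ring

private lemma hasDerivAt_g (a μ t : ℝ) {l : ℝ} (hl : l ≠ 0) :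
    HasDerivAt (fun l : ℝ => l * (1 - Real.exp (-(μ / l) * (t - a * l))))
      (1 - Real.exp (a * μ - μ * t * l⁻¹) * (1 + μ * t * l⁻¹)) l := by
  rw [fun_eq a μ t]
  have hinv : HasDerivAt (fun x : ℝ => x⁻¹) (-(l ^ 2)⁻¹) l := hasDerivAt_inv hl
  have hq : HasDerivAt (fun x : ℝ => μ * t * x⁻¹) (μ * t * -(l ^ 2)⁻¹) l :=
    hinv.const_mul (μ * t)
  have he : HasDerivAt (fun x : ℝ => a * μ - μ * t * x⁻¹) (0 - μ * t * -(l ^ 2)⁻¹) l :=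
    (hasDerivAt_const l (a * μ)).sub hq
  have hexp := he.exp
  have hprod := (hasDerivAt_id l).mul hexp
  have htot := (hasDerivAt_id l).sub hprod
  refine htot.congr_deriv ?_
  have hl2 : (l : ℝ) ^ 2 ≠ 0 := pow_ne_zero _ hl
  simp only [id]
  field_simp
  ring

private lemma hasDerivAt_g' (a μ t : ℝ) {l : ℝ} (hl : l ≠ 0) :
    HasDerivAt (fun x : ℝ => 1 - Real.exp (a * μ - μ * t * x⁻¹) * (1 + μ * t * x⁻¹))
      (-Real.exp (a * μ - μ * t * l⁻¹) * (μ ^ 2 * t ^ 2 / l ^ 3)) l := by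
  have hinv : HasDerivAt (fun x : ℝ => x⁻¹) (-(l ^ 2)⁻¹) l := hasDerivAt_inv hl
  have hq : HasDerivAt (fun x : ℝ => μ * t * x⁻¹) (μ * t * -(l ^ 2)⁻¹) l :=
    hinv.const_mul (μ * t)
  have he : HasDerivAt (fun x : ℝ => a * μ - μ * t * x⁻¹) (0 - μ * t * -(l ^ 2)⁻¹) l :=
    (hasDerivAt_const l (a * μ)).sub hq
  have hexp := he.exp
  have hq2 : HasDerivAt (fun x : ℝ => 1 + μ * t * x⁻¹) (0 + μ * t * -(l ^ 2)⁻¹) l :=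
    (hasDerivAt_const l 1).add hq
  have hmul := hexp.mul hq2
  have htot := (hasDerivAt_const l (1 : ℝ)).sub hmul
  refine htot.congr_deriv ?_
  have hl2 : (l : ℝ) ^ 2 ≠ 0 := pow_ne_zero _ hl
  have hl3 : (l : ℝ) ^ 3 ≠ 0 := pow_ne_zero _ hl
  field_simp
  ring

private lemma deriv_g_eq (a μ t : ℝ) {l : ℝ} (hl : l ≠ 0) :
    deriv (fun l : ℝ => l * (1 - Real.exp (-(μ / l) * (t - a * l)))) l
      = 1 - Real.exp (a * μ - μ * t * l⁻¹) * (1 + μ * t * l⁻¹) :=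
  (hasDerivAt_g a μ t hl).deriv

private lemma deriv2_g_eq (a μ t : ℝ) {l : ℝ} (hl : l ≠ 0) :
    deriv (deriv (fun l : ℝ => l * (1 - Real.exp (-(μ / l) * (t - a * l))))) l
      = -Real.exp (a * μ - μ * t * l⁻¹) * (μ ^ 2 * t ^ 2 / l ^ 3) := by
  have heq : deriv (fun l : ℝ => l * (1 - Real.exp (-(μ / l) * (t - a * l))))
      =ᶠ[nhds l] fun x : ℝ => 1 - Real.exp (a * μ - μ * t * x⁻¹) * (1 + μ * t * x⁻¹) := by
    filter_upwards [isOpen_compl_singleton.mem_nhds (by simpa using hl :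
      l ∈ ({0}ᶜ : Set ℝ))] with x hx
    exact deriv_g_eq a μ t (by simpa using hx)
  rw [Filter.EventuallyEq.deriv_eq heq]
  exact (hasDerivAt_g' a μ t hl).deriv

/-- Sign of the first derivative below the critical point. -/
private lemma g1_pos (a μ t lam : ℝ) (hμ : 0 < μ) (ht : 0 < t)
    (hlam : 0 < lam)
    (hlam_eq : Real.exp (μ * lam) = Real.exp (a * μ) * (μ * lam + 1))
    {l : ℝ} (hl0 : 0 < l) (hl : l < t / lam) :
    0 < 1 - Real.exp (a * μ - μ * t * l⁻¹) * (1 + μ * t * l⁻¹) := by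
  set u : ℝ := μ * t * l⁻¹ with hu
  have hu0 : 0 < u := by positivity
  have hustar : μ * lam < u := by
    have h1 : lam * l < t := by
      rw [lt_div_iff₀ hlam] at hl; linarith [hl]
    have h2 : lam < t * l⁻¹ := by
      rw [← div_eq_mul_inv, lt_div_iff₀ hl0]; linarith
    calc μ * lam < μ * (t * l⁻¹) := by exact (mul_lt_mul_iff_right₀ hμ).mpr h2
      _ = u := by rw [hu]; ring
  have key : (u - μ * lam) + 1 < Real.exp (u - μ * lam) :=
    Real.add_one_lt_exp (by linarith)
  have hsplit : Real.exp u = Real.exp (μ * lam) * Real.exp (u - μ * lam) := by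
    rw [← Real.exp_add]; ring_nf
  have hA : (0 : ℝ) < Real.exp (a * μ) := Real.exp_pos _
  have hU : (0 : ℝ) < Real.exp u := Real.exp_pos _
  have hmain : Real.exp (a * μ) * (1 + u) < Real.exp u := by
    rw [hsplit, hlam_eq]
    have hPos : (0 : ℝ) < Real.exp (a * μ) * (μ * lam + 1) := by positivity
    have h3 := mul_lt_mul_of_pos_left key hPos
    nlinarith [mul_pos hA (mul_pos (mul_pos hμ hlam) (sub_pos.mpr hustar))]
  have hE : Real.exp (a * μ - u) = Real.exp (a * μ) / Real.exp u := Real.exp_sub _ _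
  rw [sub_pos, hE, div_mul_eq_mul_div, div_lt_one hU]
  linarith
  
/-- Sign of the first derivative above the critical point. -/
private lemma g1_neg (a μ t lam : ℝ) (hμ : 0 < μ) (ht : 0 < t)
    (hlam : 0 < lam)
    (hlam_eq : Real.exp (μ * lam) = Real.exp (a * μ) * (μ * lam + 1))
    {l : ℝ} (hl0 : 0 < l) (hl : t / lam < l) :
    1 - Real.exp (a * μ - μ * t * l⁻¹) * (1 + μ * t * l⁻¹) < 0 := by
  set u : ℝ := μ * t * l⁻¹ with hu
  have hu0 : 0 < u := by positivity
  have hustar : u < μ * lam := by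
    have h1 : t < lam * l := by
      rw [div_lt_iff₀ hlam] at hl; linarith [hl]
    have h2 : t * l⁻¹ < lam := by
      rw [← div_eq_mul_inv, div_lt_iff₀ hl0]; linarith
    calc u = μ * (t * l⁻¹) := by rw [hu]; ring
      _ < μ * lam := (mul_lt_mul_iff_right₀ hμ).mpr h2
  have key : (μ * lam - u) + 1 < Real.exp (μ * lam - u) :=
    Real.add_one_lt_exp (by linarith)
  have hsplit : Real.exp (μ * lam) = Real.exp u * Real.exp (μ * lam - u) := by
    rw [← Real.exp_add]; ring_nf
  have hA : (0 : ℝ) < Real.exp (a * μ) := Real.exp_pos _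
  have hU : (0 : ℝ) < Real.exp u := Real.exp_pos _
  have hmain : Real.exp u < Real.exp (a * μ) * (1 + u) := by
    nlinarith [hsplit, hlam_eq, mul_pos hu0 (sub_pos.mpr hustar)]
  have hE : Real.exp (a * μ - u) = Real.exp (a * μ) / Real.exp u := Real.exp_sub _ _
  rw [sub_neg, hE, div_mul_eq_mul_div, lt_div_iff₀ hU]
  linarith

/-- For `a, μ, t > 0`, the function `g(ℓ) = ℓ(1 - e^{-(μ/ℓ)(t - aℓ)})` is concave on
`(0, t/a]`, its second derivative equals `-e^{-(μ/ℓ)(t-aℓ)} μ² t² / ℓ³ < 0` there, and the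
critical point `ℓ* = t/λ`, where `λ` solves `e^{μλ} = e^{aμ}(μλ+1)`, is the global
maximizer of `g` on `(0, t/a]`. -/
theorem stmt_1 (a μ t lam : ℝ) (ha : 0 < a) (hμ : 0 < μ) (ht : 0 < t)
    (hlam : 0 < lam)
    (hlam_eq : Real.exp (μ * lam) = Real.exp (a * μ) * (μ * lam + 1)) :
    ConcaveOn ℝ (Set.Ioc 0 (t / a))
      (fun l : ℝ => l * (1 - Real.exp (-(μ / l) * (t - a * l)))) ∧
    (∀ l ∈ Set.Ioo (0 : ℝ) (t / a),
      deriv (deriv (fun l : ℝ => l * (1 - Real.exp (-(μ / l) * (t - a * l))))) l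
        = -Real.exp (-(μ / l) * (t - a * l)) * (μ ^ 2 * t ^ 2 / l ^ 3) ∧
      -Real.exp (-(μ / l) * (t - a * l)) * (μ ^ 2 * t ^ 2 / l ^ 3) < 0) ∧
    (∀ l ∈ Set.Ioc (0 : ℝ) (t / a),
      l * (1 - Real.exp (-(μ / l) * (t - a * l)))
        ≤ (t / lam) * (1 - Real.exp (-(μ / (t / lam)) * (t - a * (t / lam))))) := by
  set g : ℝ → ℝ := fun l : ℝ => l * (1 - Real.exp (-(μ / l) * (t - a * l))) with hg
  -- continuity on subsets of (0, ∞)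
  have hcont : ∀ s : Set ℝ, (∀ x ∈ s, (0 : ℝ) < x) → ContinuousOn g s := by
    intro s hs x hx
    exact (hasDerivAt_g a μ t (ne_of_gt (hs x hx))).continuousAt.continuousWithinAt
  -- second derivative formula and negativity
  have hsecond : ∀ l ∈ Set.Ioo (0 : ℝ) (t / a),
      deriv (deriv g) l = -Real.exp (-(μ / l) * (t - a * l)) * (μ ^ 2 * t ^ 2 / l ^ 3) ∧
      -Real.exp (-(μ / l) * (t - a * l)) * (μ ^ 2 * t ^ 2 / l ^ 3) < 0 := by
    intro l hl
    have hl0 : (0 : ℝ) < l := hl.1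
    have hlne : l ≠ 0 := ne_of_gt hl0
    constructor
    · rw [hg, deriv2_g_eq a μ t hlne, exp_arg_eq a μ t hlne]
    · have h1 : (0 : ℝ) < Real.exp (-(μ / l) * (t - a * l)) := Real.exp_pos _
      have h2 : (0 : ℝ) < μ ^ 2 * t ^ 2 / l ^ 3 := by positivity
      nlinarith
  -- concavity
  have hconc : ConcaveOn ℝ (Set.Ioc 0 (t / a)) g := by
    have := strictConcaveOn_of_deriv2_neg (convex_Ioc (0 : ℝ) (t / a))
      (hcont _ fun x hx => hx.1) (f := g) ?_
    · exact this.concaveOn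
    · intro x hx
      rw [interior_Ioc] at hx
      have := hsecond x hx
      simp only [Function.iterate_succ, Function.iterate_zero, Function.comp_apply,
        Function.id_def]
      calc deriv (deriv g) x = -Real.exp (-(μ / x) * (t - a * x)) * (μ ^ 2 * t ^ 2 / x ^ 3) :=
            this.1
        _ < 0 := this.2
  refine ⟨hconc, hsecond, ?_⟩
  -- the critical point lies in the interval
  have halam : a < lam := by
    have h1 : Real.exp (a * μ) < Real.exp (μ * lam) := by
      nlinarith [Real.exp_pos (a * μ), mul_pos hμ hlam]
    have := Real.exp_lt_exp.mp h1
    nlinarith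
  have hstar_pos : (0 : ℝ) < t / lam := by positivity
  have hstar_lt : t / lam < t / a := by
    exact div_lt_div_of_pos_left ht ha halam
  -- monotone below the critical point
  have hmono : StrictMonoOn g (Set.Ioc 0 (t / lam)) := by
    apply strictMonoOn_of_deriv_pos (convex_Ioc _ _) (hcont _ fun x hx => hx.1)
    intro x hx
    rw [interior_Ioc] at hx
    rw [hg, deriv_g_eq a μ t (ne_of_gt hx.1)]
    exact g1_pos a μ t lam hμ ht hlam hlam_eq hx.1 hx.2
  -- antitone above the critical point
  have hanti : StrictAntiOn g (Set.Icc (t / lam) (t / a)) := by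
    apply strictAntiOn_of_deriv_neg (convex_Icc _ _)
      (hcont _ fun x hx => lt_of_lt_of_le hstar_pos hx.1)
    intro x hx
    rw [interior_Icc] at hx
    rw [hg, deriv_g_eq a μ t (ne_of_gt (lt_trans hstar_pos hx.1))]
    exact g1_neg a μ t lam hμ ht hlam hlam_eq (lt_trans hstar_pos hx.1) hx.1
  intro l hl
  rcases lt_trichotomy l (t / lam) with hlt | heq | hgt
  · exact (hmono ⟨hl.1, hlt.le⟩ ⟨hstar_pos, le_refl _⟩ hlt).le
  · rw [heq]
  · exact (hanti ⟨le_refl _, hstar_lt.le⟩ ⟨hgt.le, hl.2⟩ hgt).le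
end

section
/- Suppose each worker $i \in [n]$ has shifted exponential run-time with parameters $a_i, \mu_i > 0$ and is assigned load $\ell_i^*(t) = t/\lambda_i$, where $\lambda_i$ is the positive solution of $e^{\mu_i \lambda_i} = e^{a_i \mu_i}(\mu_i \lambda_i + 1)$. Then the expected aggregate return at time $t$ satisfies $\mathbb{E}[X^*(t)] = \sum_{i=1}^n \ell_i^*(t)\left(1 - e^{-\frac{\mu_i}{\ell_i^*(t)}(t - a_i \ell_i^*(t))}\right) = t \cdot s$, where $s = \sum_{i=1}^n \frac{\mu_i}{1 + \mu_i \lambda_i}$. -/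
open Real

/-- If each worker `i < n` has shifted exponential parameters `a_i, μ_i > 0` and load
`ℓ_i*(t) = t/λ_i`, where `λ_i` is the positive solution of
`e^{μ_i λ_i} = e^{a_i μ_i}(μ_i λ_i + 1)`, then the expected aggregate return at time
`t > 0` satisfies `∑ ℓ_i*(t)(1 - e^{-(μ_i/ℓ_i*(t))(t - a_i ℓ_i*(t))}) = t·s`, where
`s = ∑ μ_i/(1 + μ_i λ_i)`. -/
theorem stmt_9 (n : ℕ) (a μ lam : ℕ → ℝ) (t : ℝ) (ht : 0 < t)
    (ha : ∀ i < n, 0 < a i) (hμ : ∀ i < n, 0 < μ i) (hlam : ∀ i < n, 0 < lam i)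
    (heq : ∀ i < n, Real.exp (μ i * lam i) = Real.exp (a i * μ i) * (μ i * lam i + 1)) :
    ∑ i ∈ Finset.range n,
        (t / lam i) * (1 - Real.exp (-(μ i / (t / lam i)) * (t - a i * (t / lam i))))
      = t * ∑ i ∈ Finset.range n, μ i / (1 + μ i * lam i) := by
  rw [Finset.mul_sum]
  apply Finset.sum_congr rfl
  intro i hi
  rw [Finset.mem_range] at hi
  have hμi := hμ i hi
  have hli := hlam i hi
  have hml : 0 < μ i * lam i + 1 := by positivity
  have hexp : -(μ i / (t / lam i)) * (t - a i * (t / lam i)) = a i * μ i - μ i * lam i := by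
    field_simp
    ring
  have hE : Real.exp (a i * μ i - μ i * lam i) = 1 / (μ i * lam i + 1) := by
    rw [Real.exp_sub, heq i hi]
    field_simp
  rw [hexp, hE]
  have hl' : lam i ≠ 0 := ne_of_gt hli
  field_simp
  ring
end

section
/- For constants $a, \mu, \alpha > 0$, the equation $e^{\mu^{\alpha}(\lambda - a)^{\alpha}} = 1 + \alpha\mu^{\alpha}\lambda(\lambda - a)^{\alpha - 1}$, considered for $\lambda > a$, has a solution, and for any such solution $\lambda$ one has $\frac{1}{\lambda}\left(1 - e^{-(\mu\lambda(1 - a/\lambda))^{\alpha}}\right) = \frac{\alpha\mu^{\alpha}(\lambda - a)^{\alpha - 1}}{1 + \alpha\mu^{\alpha}\lambda(\lambda - a)^{\alpha - 1}}$. -/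
open Real

theorem exists_root (a c α : ℝ) (ha : 0 < a) (hc : 0 < c) (hα : 0 < α) :
    ∃ lam : ℝ, a < lam ∧
      Real.exp (c * (lam - a) ^ α) = 1 + α * c * lam * (lam - a) ^ (α - 1) := by
  set g : ℝ → ℝ := fun l => Real.exp (c * (l - a) ^ α) - (1 + α * c * l * (l - a) ^ (α - 1)) with hg
  set t₀ : ℝ := min 1 (a * α / (2 * Real.exp c)) with ht0def
  have ht0 : 0 < t₀ := lt_min one_pos (by positivity)
  have ht01 : t₀ ≤ 1 := min_le_left _ _
  set K : ℝ := 4 * α * (1 + a) / c with hKdef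
  have hK0 : 0 < K := by positivity
  set t₁ : ℝ := max (max 1 t₀) (K ^ (1/α)) with ht1def
  have ht1_t0 : t₀ ≤ t₁ := le_trans (le_max_right 1 t₀) (le_max_left _ _)
  have ht1_1 : 1 ≤ t₁ := le_trans (le_max_left 1 t₀) (le_max_left _ _)
  have ht1pos : 0 < t₁ := lt_of_lt_of_le one_pos ht1_1
  have ht1K : K ≤ t₁ ^ α := by
    have h1 : K ^ (1/α) ≤ t₁ := le_max_right _ _
    have h2 : (K ^ (1/α)) ^ α ≤ t₁ ^ α :=
      Real.rpow_le_rpow (Real.rpow_nonneg hK0.le _) h1 hα.le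
    rwa [one_div, Real.rpow_inv_rpow hK0.le hα.ne'] at h2
  -- negative point
  have hneg : g (a + t₀) < 0 := by
    have hsub : a + t₀ - a = t₀ := by ring
    have hs : (0:ℝ) < t₀ ^ α := Real.rpow_pos_of_pos ht0 _
    have hE : (0:ℝ) < Real.exp (c * t₀ ^ α) := Real.exp_pos _
    have hexp : Real.exp (c * t₀ ^ α) < 1 + (c * t₀ ^ α) * Real.exp (c * t₀ ^ α) := by
      have h := Real.add_one_lt_exp (x := -(c * t₀ ^ α)) (neg_ne_zero.2 (by positivity))
      rw [Real.exp_neg] at h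
      have h2 : (-(c * t₀ ^ α) + 1) * Real.exp (c * t₀ ^ α) < 1 := by
        have := mul_lt_mul_of_pos_right h hE
        rwa [inv_mul_cancel₀ hE.ne'] at this
      nlinarith
    have hbound : t₀ * Real.exp (c * t₀ ^ α) ≤ a * α / 2 := by
      have h1 : t₀ ^ α ≤ 1 := Real.rpow_le_one ht0.le ht01 hα.le
      have h2 : Real.exp (c * t₀ ^ α) ≤ Real.exp c := by
        apply Real.exp_le_exp.2; nlinarith
      have h3 : t₀ ≤ a * α / (2 * Real.exp c) := min_le_right _ _
      calc t₀ * Real.exp (c * t₀ ^ α) ≤ (a * α / (2 * Real.exp c)) * Real.exp c := by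
            apply mul_le_mul h3 h2 hE.le (by positivity)
        _ = a * α / 2 := by field_simp
    have key : (c * t₀ ^ α) * Real.exp (c * t₀ ^ α) ≤ α * c * (a + t₀) * t₀ ^ (α - 1) := by
      have h1 : t₀ ^ (α - 1) = t₀ ^ α / t₀ := by
        rw [Real.rpow_sub ht0, Real.rpow_one]
      rw [h1, ← mul_div_assoc, le_div_iff₀ ht0]
      have h4 := mul_le_mul_of_nonneg_left hbound (by positivity : (0:ℝ) ≤ c * t₀ ^ α)
      nlinarith [mul_pos hc hs, mul_pos (mul_pos hc hs) ht0]
    simp only [hg, hsub]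
    nlinarith
  -- positive point
  have hpos : 0 ≤ g (a + t₁) := by
    have hsub : a + t₁ - a = t₁ := by ring
    set x : ℝ := c * t₁ ^ α with hxdef
    have hx0 : 0 < x := by positivity
    have hx4 : 4 * α * (1 + a) ≤ x := by
      have := mul_le_mul_of_nonneg_left ht1K hc.le
      rwa [hKdef, mul_div_cancel₀ _ hc.ne'] at this
    have hquad : 1 + x ^ 2 / 4 ≤ Real.exp x := by
      have h := Real.add_one_le_exp (x / 2)
      have h2 : Real.exp x = Real.exp (x / 2) * Real.exp (x / 2) := by
        rw [← Real.exp_add]; ring_nf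
      nlinarith [Real.exp_pos (x / 2)]
    have hrhs0 : α * c * (a + t₁) * t₁ ^ (α - 1) ≤ α * (1 + a) * (c * t₁ ^ α) := by
      have h1 : t₁ ^ (α - 1) = t₁ ^ α / t₁ := by
        rw [Real.rpow_sub ht1pos, Real.rpow_one]
      rw [h1, ← mul_div_assoc, div_le_iff₀ ht1pos]
      have hta : (0:ℝ) < t₁ ^ α := Real.rpow_pos_of_pos ht1pos _
      nlinarith [mul_nonneg (mul_nonneg (mul_nonneg (mul_nonneg hα.le hc.le) hta.le) ha.le) (sub_nonneg.2 ht1_1)]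
    have hrhs : α * c * (a + t₁) * t₁ ^ (α - 1) ≤ α * (1 + a) * x := by
      rw [hxdef]; exact hrhs0
    have hmid : α * (1 + a) * x ≤ x ^ 2 / 4 := by nlinarith
    simp only [hg, hsub]
    have : (1 : ℝ) + α * c * (a + t₁) * t₁ ^ (α - 1) ≤ Real.exp (c * t₁ ^ α) := by
      calc (1:ℝ) + α * c * (a + t₁) * t₁ ^ (α - 1) ≤ 1 + x ^ 2 / 4 := by linarith
        _ ≤ Real.exp x := hquad
    linarith
  -- continuity
  have hcont : ContinuousOn g (Set.Icc (a + t₀) (a + t₁)) := by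
    have hne : ∀ x ∈ Set.Icc (a + t₀) (a + t₁), x - a ≠ 0 ∨ (0:ℝ) ≤ α := fun x hx =>
      Or.inl (by have := hx.1; intro h; nlinarith)
    have hne' : ∀ x ∈ Set.Icc (a + t₀) (a + t₁), x - a ≠ 0 ∨ (0:ℝ) ≤ α - 1 := fun x hx =>
      Or.inl (by have := hx.1; intro h; nlinarith)
    have hbase : ContinuousOn (fun x : ℝ => x - a) (Set.Icc (a + t₀) (a + t₁)) :=
      (continuous_id.sub continuous_const).continuousOn
    exact (Real.continuous_exp.comp_continuousOn
        (continuousOn_const.mul (hbase.rpow_const hne))).sub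
      (continuousOn_const.add ((continuousOn_const.mul continuousOn_id).mul
        (hbase.rpow_const hne')))
  have hmem : (0:ℝ) ∈ Set.Icc (g (a + t₀)) (g (a + t₁)) := ⟨hneg.le, hpos⟩
  obtain ⟨lam, hlam, heq⟩ := intermediate_value_Icc (by linarith : a + t₀ ≤ a + t₁) hcont hmem
  refine ⟨lam, by linarith [hlam.1], ?_⟩
  have : Real.exp (c * (lam - a) ^ α) - (1 + α * c * lam * (lam - a) ^ (α - 1)) = 0 := heq
  linarith

/-- For constants `a, μ, α > 0`, the equation
`e^{μ^α (λ-a)^α} = 1 + α μ^α λ (λ-a)^{α-1}`, considered for `λ > a`, has a solution,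
and any such solution satisfies
`(1/λ)(1 - e^{-(μλ(1 - a/λ))^α}) = α μ^α (λ-a)^{α-1} / (1 + α μ^α λ (λ-a)^{α-1})`. -/
theorem stmt_11 (a μ α : ℝ) (ha : 0 < a) (hμ : 0 < μ) (hα : 0 < α) :
    (∃ lam : ℝ, a < lam ∧
      Real.exp (μ ^ α * (lam - a) ^ α) = 1 + α * μ ^ α * lam * (lam - a) ^ (α - 1)) ∧
    (∀ lam : ℝ, a < lam →
      Real.exp (μ ^ α * (lam - a) ^ α) = 1 + α * μ ^ α * lam * (lam - a) ^ (α - 1) →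
      (1 / lam) * (1 - Real.exp (-(μ * lam * (1 - a / lam)) ^ α))
        = α * μ ^ α * (lam - a) ^ (α - 1) / (1 + α * μ ^ α * lam * (lam - a) ^ (α - 1))) := by
  have hc : 0 < μ ^ α := Real.rpow_pos_of_pos hμ α
  constructor
  · exact exists_root a (μ ^ α) α ha hc hα
  · intro lam hlam heq
    have hl0 : 0 < lam := lt_trans ha hlam
    have h1 : μ * lam * (1 - a / lam) = μ * (lam - a) := by field_simp
    have h2 : (μ * (lam - a)) ^ α = μ ^ α * (lam - a) ^ α :=
      Real.mul_rpow hμ.le (by linarith)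
    rw [h1, h2, Real.exp_neg, heq]
    have hE : 0 < 1 + α * μ ^ α * lam * (lam - a) ^ (α - 1) := heq ▸ Real.exp_pos _
    rw [eq_div_iff hE.ne', mul_assoc, sub_mul, inv_mul_cancel₀ hE.ne']
    field_simp
    ring
end

section
/- Suppose for each worker $i \in [n]$ the run-time $T_i$ with load $\ell_i^*(t) = t/\lambda_i$ is shifted exponential with parameters $a_i, \mu_i$, where $\lambda_i > a_i$ solves $e^{\mu_i \lambda_i} = e^{a_i\mu_i}(\mu_i\lambda_i + 1)$, and suppose $a_i, \mu_i, \lambda_i$ are bounded above and below by positive constants independent of $n$. Let $s = \sum_i \mu_i/(1 + \mu_i \lambda_i)$, $r$ with $r = \Theta(n)$, $\tau^* = r/s$, and let $t = \tau^* + \delta$ with $\delta = \Theta(\log n / \sqrt{n})$. Then $\Pr[X^*(t) \le r - \delta^2] \le e^{-c n \delta^2}$ for some constant $c > 0$ and sufficiently large $n$; in particular $\Pr[X^*(t) < r] = o(1/n)$. -/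
open MeasureTheory ProbabilityTheory Real Filter

lemma exp_neg_le_quad {u : ℝ} (hu : 0 ≤ u) : Real.exp (-u) ≤ 1 - u + u^2/2 := by
  have h1 : 1 + u + u^2/2 ≤ Real.exp u := Real.quadratic_le_exp_of_nonneg hu
  have h2 : Real.exp (-u) * Real.exp u = 1 := by rw [← Real.exp_add]; simp
  have h3 : 0 < Real.exp (-u) := Real.exp_pos _
  nlinarith [sq_nonneg (u*u), mul_le_mul_of_nonneg_left h1 h3.le, sq_nonneg u]

lemma integral_ite' {Ω : Type*} [MeasurableSpace Ω] (P : Measure Ω) [IsProbabilityMeasure P]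
    {S : Set Ω} [DecidablePred (· ∈ S)] (hS : MeasurableSet S) (A B : ℝ) :
    ∫ ω, (if ω ∈ S then A else B) ∂P = (P S).toReal * A + (1 - (P S).toReal) * B := by
  have h : (fun ω => if ω ∈ S then A else B) = fun ω => S.indicator (fun _ => A - B) ω + B := by
    funext ω; by_cases h : ω ∈ S <;> simp [h]
  rw [h, integral_add ((integrable_const (A-B)).indicator hS) (integrable_const B),
    integral_indicator_const _ hS, integral_const]
  simp [measure_univ]
  rw [measureReal_def]
  ring

lemma integrable_ite' {Ω : Type*} [MeasurableSpace Ω] (P : Measure Ω) [IsProbabilityMeasure P]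
    {S : Set Ω} [DecidablePred (· ∈ S)] (hS : MeasurableSet S) (A B : ℝ) :
    Integrable (fun ω => if ω ∈ S then A else B) P := by
  have h : (fun ω => if ω ∈ S then A else B) = fun ω => S.indicator (fun _ => A - B) ω + B := by
    funext ω; by_cases h : ω ∈ S <;> simp [h]
  rw [h]
  exact ((integrable_const (A-B)).indicator hS).add (integrable_const B)

set_option maxHeartbeats 2000000 in
/-- For each cluster size `n`, worker `i < n` has shifted exponential run-time `T n i`
with parameters `a n i, μ n i` under load `ℓ_i*(t n) = t n / λ n i`, where
`λ n i > a n i` solves `e^{μλ} = e^{aμ}(μλ + 1)` and all parameters are bounded above and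
below by positive constants independent of `n`. With `s n = ∑ μ/(1+μλ)`, `r n = Θ(n)`,
`τ* n = r n / s n`, `δ n = Θ(log n/√n)`, and `t n = τ* n + δ n`, the aggregate return
`X* n = ∑_{i<n} ℓ_i*(t n) 1{T n i ≤ t n}` satisfies
`P[X* n ≤ r n - δ n²] ≤ e^{-c n δ n²}` for some `c > 0` and large `n`; in particular
`P[X* n < r n] = o(1/n)`. -/
theorem stmt_15 {Ω : Type*} [MeasurableSpace Ω] (P : Measure Ω) [IsProbabilityMeasure P]
    (T : ℕ → ℕ → Ω → ℝ) (hmeas : ∀ n i, Measurable (T n i))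
    (a μ lam : ℕ → ℕ → ℝ) (r δ s t : ℕ → ℝ) (X : ℕ → Ω → ℝ)
    (hbdd : ∃ c₁ c₂ : ℝ, 0 < c₁ ∧ ∀ n : ℕ, ∀ i < n,
      c₁ ≤ a n i ∧ a n i ≤ c₂ ∧ c₁ ≤ μ n i ∧ μ n i ≤ c₂ ∧ c₁ ≤ lam n i ∧ lam n i ≤ c₂)
    (hlam : ∀ n : ℕ, ∀ i < n, a n i < lam n i ∧
      Real.exp (μ n i * lam n i) = Real.exp (a n i * μ n i) * (μ n i * lam n i + 1))
    (hr : ∃ c₃ c₄ : ℝ, 0 < c₃ ∧ 0 < c₄ ∧ ∀ n : ℕ, 1 ≤ n →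
      c₃ * n ≤ r n ∧ r n ≤ c₄ * n)
    (hδ : ∃ c₅ c₆ : ℝ, 0 < c₅ ∧ 0 < c₆ ∧ ∀ᶠ n : ℕ in Filter.atTop,
      c₅ * Real.log n / Real.sqrt n ≤ δ n ∧ δ n ≤ c₆ * Real.log n / Real.sqrt n)
    (hs : ∀ n : ℕ, s n = ∑ i ∈ Finset.range n, μ n i / (1 + μ n i * lam n i))
    (ht : ∀ n : ℕ, t n = r n / s n + δ n)
    (hindep : ∀ n : ℕ, iIndepFun (T n) P)
    (hcdf : ∀ n : ℕ, 1 ≤ n → ∀ i < n, ∀ u : ℝ, a n i * (t n / lam n i) ≤ u →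
      P {ω | T n i ω ≤ u} =
        ENNReal.ofReal (1 - Real.exp (-(μ n i / (t n / lam n i)) * (u - a n i * (t n / lam n i)))))
    (hX : ∀ n : ℕ, ∀ ω : Ω,
      X n ω = ∑ i ∈ Finset.range n, if T n i ω ≤ t n then t n / lam n i else 0) :
    (∃ c : ℝ, 0 < c ∧ ∀ᶠ n : ℕ in Filter.atTop,
      (P {ω | X n ω ≤ r n - (δ n) ^ 2}).toReal ≤ Real.exp (-(c * n * (δ n) ^ 2))) ∧
    Filter.Tendsto (fun n : ℕ => (n : ℝ) * (P {ω | X n ω < r n}).toReal)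
      Filter.atTop (nhds 0) := by
  classical
  obtain ⟨c₁, c₂, hc₁, hb⟩ := hbdd
  obtain ⟨c₃, c₄, hc₃, hc₄, hrb⟩ := hr
  obtain ⟨c₅, c₆, hc₅, hc₆, hδb⟩ := hδ
  have hc₂ : 0 < c₂ := hc₁.trans_le ((hb 1 0 Nat.one_pos).1.trans (hb 1 0 Nat.one_pos).2.1)
  obtain ⟨α, hα_def, hα⟩ : ∃ x : ℝ, x = c₁ / (1 + c₂^2) ∧ 0 < x :=
    ⟨_, rfl, by positivity⟩
  -- bounds on s
  have hsbd : ∀ n : ℕ, α * n ≤ s n ∧ s n ≤ c₂ * n := by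
    intro n
    rw [hs n]
    constructor
    · calc α * n = ∑ _i ∈ Finset.range n, α := by
            simp [Finset.sum_const, Finset.card_range, mul_comm]
        _ ≤ _ := by
            refine Finset.sum_le_sum fun i hi => ?_
            obtain ⟨_, _, hμ₁, hμ₂, hl₁, hl₂⟩ := hb n i (Finset.mem_range.1 hi)
            have h1 : 0 < 1 + μ n i * lam n i := by nlinarith
            rw [hα_def]
            apply div_le_div₀ (hc₁.le.trans hμ₁) hμ₁ h1
            nlinarith
    · calc (∑ i ∈ Finset.range n, μ n i / (1 + μ n i * lam n i))
          ≤ ∑ _i ∈ Finset.range n, c₂ := by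
            refine Finset.sum_le_sum fun i hi => ?_
            obtain ⟨_, _, hμ₁, hμ₂, hl₁, hl₂⟩ := hb n i (Finset.mem_range.1 hi)
            have h1 : (1:ℝ) ≤ 1 + μ n i * lam n i := by nlinarith
            exact (div_le_self (by linarith) h1).trans hμ₂
        _ = c₂ * n := by simp [Finset.sum_const, Finset.card_range, mul_comm]
  obtain ⟨t₁, ht₁_def, ht₁pos⟩ : ∃ x : ℝ, x = c₃ / c₂ ∧ 0 < x :=
    ⟨_, rfl, by positivity⟩
  obtain ⟨t₂, ht₂_def, ht₂pos⟩ : ∃ x : ℝ, x = c₄ / α + 2 * c₆ ∧ 0 < x :=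
    ⟨_, rfl, by positivity⟩
  obtain ⟨L₂, hL₂_def, hL₂pos⟩ : ∃ x : ℝ, x = t₂ / c₁ ∧ 0 < x :=
    ⟨_, rfl, by positivity⟩
  obtain ⟨c, hc_def, hcpos⟩ : ∃ x : ℝ, x = α^2 / (2 * L₂^2) ∧ 0 < x :=
    ⟨_, rfl, by positivity⟩
  -- the key eventual bound
  have key : ∀ᶠ n : ℕ in Filter.atTop,
      (P {ω | X n ω ≤ r n}).toReal ≤ Real.exp (-(c * n * (δ n)^2)) ∧
      0 ≤ δ n ∧ c₅ * Real.log n / Real.sqrt n ≤ δ n := by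
    filter_upwards [hδb, eventually_ge_atTop 1] with n hδn hn
    have hn1 : (1:ℝ) ≤ (n:ℝ) := by exact_mod_cast hn
    have hnpos : (0:ℝ) < n := by linarith
    have hlog : 0 ≤ Real.log n := Real.log_nonneg hn1
    have hsqrt : 0 < Real.sqrt n := Real.sqrt_pos.2 hnpos
    have hδ0 : 0 ≤ δ n := le_trans (by positivity) hδn.1
    have hlogle : Real.log n ≤ 2 * Real.sqrt n := by
      have h1 : Real.log (Real.sqrt n) ≤ Real.sqrt n - 1 :=
        Real.log_le_sub_one_of_pos hsqrt
      have h2 : Real.log (Real.sqrt n) = Real.log n / 2 := Real.log_sqrt hnpos.le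
      linarith [h2 ▸ h1]
    have hδle : δ n ≤ 2 * c₆ := by
      refine hδn.2.trans ?_
      rw [div_le_iff₀ hsqrt]
      nlinarith
    obtain ⟨hs₁, hs₂⟩ := hsbd n
    have hspos : 0 < s n := lt_of_lt_of_le (by nlinarith) hs₁
    obtain ⟨hr₁, hr₂⟩ := hrb n hn
    -- bounds on t n
    have ht1 : t₁ ≤ t n := by
      rw [ht n, ht₁_def]
      have : c₃ / c₂ ≤ r n / s n := by
        rw [div_le_div_iff₀ hc₂ hspos]
        nlinarith [mul_le_mul_of_nonneg_left hs₂ hc₃.le, mul_le_mul_of_nonneg_right hr₁ hc₂.le]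
      linarith
    have ht2 : t n ≤ t₂ := by
      rw [ht n, ht₂_def]
      have : r n / s n ≤ c₄ / α := by
        rw [div_le_div_iff₀ hspos hα]
        nlinarith [mul_le_mul_of_nonneg_right hr₂ hα.le, mul_le_mul_of_nonneg_left hs₁ hc₄.le]
      linarith
    have htpos : 0 < t n := lt_of_lt_of_le ht₁pos ht1
    -- per worker facts
    obtain ⟨θ, hθ_def, hθ0⟩ : ∃ x : ℝ, x = α * δ n / L₂^2 ∧ 0 ≤ x :=
      ⟨_, rfl, by positivity⟩
    set Y : ℕ → Ω → ℝ := fun i ω => if T n i ω ≤ t n then t n / lam n i else 0 with hY_def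
    have hXeq : X n = ∑ i ∈ Finset.range n, Y i := by
      funext ω
      rw [hX n ω, Finset.sum_apply]
    have hYmeas : ∀ i, Measurable (Y i) := fun i =>
      Measurable.ite (measurableSet_le (hmeas n i) measurable_const)
        measurable_const measurable_const
    have hYindep : iIndepFun Y P := by
      have := (hindep n).comp (fun i (x : ℝ) => if x ≤ t n then t n / lam n i else 0)
        (fun i => Measurable.ite (measurableSet_le measurable_id measurable_const)
          measurable_const measurable_const)
      exact this
    set p : ℕ → ℝ := fun i => (P {ω | T n i ω ≤ t n}).toReal with hp_def
    have hfacts : ∀ i ∈ Finset.range n,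
        p i = 1 - 1 / (1 + μ n i * lam n i) ∧
        p i * (t n / lam n i) = t n * (μ n i / (1 + μ n i * lam n i)) ∧
        0 ≤ p i ∧ p i ≤ 1 ∧ t₁ / c₂ ≤ t n / lam n i ∧ t n / lam n i ≤ L₂ := by
      intro i hi
      have hi' := Finset.mem_range.1 hi
      obtain ⟨ha₁, ha₂, hμ₁, hμ₂, hl₁, hl₂⟩ := hb n i hi'
      have hlampos : 0 < lam n i := hc₁.trans_le hl₁
      have hμpos : 0 < μ n i := hc₁.trans_le hμ₁
      have hapos : 0 < a n i := hc₁.trans_le ha₁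
      have hden : 0 < 1 + μ n i * lam n i := by nlinarith
      obtain ⟨halt, heq⟩ := hlam n i hi'
      have hℓpos : 0 < t n / lam n i := by positivity
      -- exp identity
      have hexp : Real.exp (-(μ n i * (lam n i - a n i))) = 1 / (1 + μ n i * lam n i) := by
        have h1 : Real.exp (μ n i * (lam n i - a n i)) * Real.exp (a n i * μ n i)
            = Real.exp (a n i * μ n i) * (μ n i * lam n i + 1) := by
          rw [← Real.exp_add, ← heq]; ring_nf
        have h2 : Real.exp (μ n i * (lam n i - a n i)) = μ n i * lam n i + 1 := by
          have := mul_right_cancel₀ (Real.exp_ne_zero (a n i * μ n i))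
            (h1.trans (mul_comm _ _))
          exact this
        rw [Real.exp_neg, h2]
        rw [one_div]
        congr 1
        ring
      have hcdf' := hcdf n hn i hi' (t n) (by
        have h1 : a n i * (t n / lam n i) ≤ lam n i * (t n / lam n i) :=
          mul_le_mul_of_nonneg_right halt.le hℓpos.le
        have h2 : lam n i * (t n / lam n i) = t n := by field_simp
        linarith)
      have hargeq : -(μ n i / (t n / lam n i)) * (t n - a n i * (t n / lam n i))
          = -(μ n i * (lam n i - a n i)) := by
        field_simp
      have hpval : p i = 1 - 1 / (1 + μ n i * lam n i) := by
        rw [hp_def]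
        simp only
        rw [hcdf', hargeq, hexp, ENNReal.toReal_ofReal]
        have : 1 / (1 + μ n i * lam n i) ≤ 1 := by
          rw [div_le_one hden]; nlinarith
        linarith
      have hp0 : 0 ≤ p i := ENNReal.toReal_nonneg
      have hp1 : p i ≤ 1 := by
        rw [hpval]
        have : 0 ≤ 1 / (1 + μ n i * lam n i) := by positivity
        linarith
      refine ⟨hpval, ?_, hp0, hp1, ?_, ?_⟩
      · rw [hpval]
        field_simp
        ring
      · apply div_le_div₀ htpos.le ht1 hlampos hl₂
      · rw [hL₂_def]
        apply div_le_div₀ ht₂pos.le ht2 hc₁ hl₁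
    -- integrability of exp(-θ Y i)
    have hYint : ∀ i ∈ Finset.range n,
        Integrable (fun ω => Real.exp (-θ * Y i ω)) P := by
      intro i hi
      have h : (fun ω => Real.exp (-θ * Y i ω)) =
          fun ω => if ω ∈ {ω | T n i ω ≤ t n} then Real.exp (-θ * (t n / lam n i)) else 1 := by
        funext ω
        rw [hY_def]
        by_cases h : T n i ω ≤ t n <;> simp [h]
      rw [h]
      exact integrable_ite' P (measurableSet_le (hmeas n i) measurable_const) _ _
    have hXint : Integrable (fun ω => Real.exp (-θ * X n ω)) P := by
      rw [hXeq]
      exact hYindep.integrable_exp_mul_sum hYmeas hYint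
    -- Chernoff
    have hcher := measure_le_le_exp_mul_mgf (X := X n) (μ := P) (t := -θ) (r n)
      (neg_nonpos.2 hθ0) hXint
    -- mgf product
    have hmgf_sum : mgf (X n) P (-θ) = ∏ i ∈ Finset.range n, mgf (Y i) P (-θ) := by
      rw [hXeq]
      exact hYindep.mgf_sum hYmeas _
    -- each mgf value and bound
    have hmgf_le : ∀ i ∈ Finset.range n,
        mgf (Y i) P (-θ) ≤
          Real.exp (-θ * (p i * (t n / lam n i)) + θ^2/2 * (p i * (t n / lam n i)^2)) := by
      intro i hi
      obtain ⟨hpval, hplℓ, hp0, hp1, hℓ₁, hℓ₂⟩ := hfacts i hi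
      set ℓ : ℝ := t n / lam n i with hℓ_def
      have hℓ0 : 0 ≤ ℓ := le_trans (by positivity) hℓ₁
      have hmgf_eq : mgf (Y i) P (-θ) = p i * Real.exp (-θ * ℓ) + (1 - p i) * 1 := by
        have h : (fun ω => Real.exp (-θ * Y i ω)) =
            fun ω => if ω ∈ {ω | T n i ω ≤ t n} then Real.exp (-θ * ℓ) else 1 := by
          funext ω
          rw [hY_def]
          by_cases h : T n i ω ≤ t n <;> simp [h, hℓ_def]
        rw [show mgf (Y i) P (-θ) = ∫ ω, Real.exp (-θ * Y i ω) ∂P from rfl, h,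
          integral_ite' P (measurableSet_le (hmeas n i) measurable_const)]
      rw [hmgf_eq]
      have hq : Real.exp (-θ * ℓ) ≤ 1 - θ*ℓ + (θ*ℓ)^2/2 := by
        have := exp_neg_le_quad (u := θ*ℓ) (by positivity)
        rwa [← neg_mul] at this
      have h2 : p i * Real.exp (-θ * ℓ) + (1 - p i) * 1
          ≤ 1 + (-θ * (p i * ℓ) + θ^2/2 * (p i * ℓ^2)) := by
        have hm := mul_le_mul_of_nonneg_left hq hp0
        have hring : p i * (1 - θ*ℓ + (θ*ℓ)^2/2) + (1 - p i) * 1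
            = 1 + (-θ * (p i * ℓ) + θ^2/2 * (p i * ℓ^2)) := by ring
        linarith only [hm, hring]
      refine h2.trans ?_
      have := Real.add_one_le_exp (-θ * (p i * ℓ) + θ^2/2 * (p i * ℓ^2))
      linarith
    have hmgf_nonneg : ∀ i ∈ Finset.range n, 0 ≤ mgf (Y i) P (-θ) :=
      fun i _ => mgf_nonneg
    have hprod_le : mgf (X n) P (-θ) ≤
        Real.exp (∑ i ∈ Finset.range n,
          (-θ * (p i * (t n / lam n i)) + θ^2/2 * (p i * (t n / lam n i)^2))) := by
      rw [hmgf_sum, Real.exp_sum]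
      exact Finset.prod_le_prod hmgf_nonneg hmgf_le
    -- sum computations
    have hsum1 : ∑ i ∈ Finset.range n, p i * (t n / lam n i) = t n * s n := by
      rw [hs n, Finset.mul_sum]
      refine Finset.sum_congr rfl fun i hi => ?_
      exact (hfacts i hi).2.1
    have hsum2 : ∑ i ∈ Finset.range n, p i * (t n / lam n i)^2 ≤ n * L₂^2 := by
      calc ∑ i ∈ Finset.range n, p i * (t n / lam n i)^2
          ≤ ∑ _i ∈ Finset.range n, L₂^2 := by
            refine Finset.sum_le_sum fun i hi => ?_
            obtain ⟨_, _, hp0, hp1, hℓ₁, hℓ₂⟩ := hfacts i hi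
            have hℓ0 : 0 ≤ t n / lam n i := le_trans (by positivity) hℓ₁
            have : (t n / lam n i)^2 ≤ L₂^2 := by nlinarith
            nlinarith
        _ = n * L₂^2 := by simp [Finset.sum_const, Finset.card_range]
    have hsum_le : ∑ i ∈ Finset.range n,
        (-θ * (p i * (t n / lam n i)) + θ^2/2 * (p i * (t n / lam n i)^2))
        ≤ -θ * (t n * s n) + θ^2/2 * (n * L₂^2) := by
      rw [Finset.sum_add_distrib, ← Finset.mul_sum, ← Finset.mul_sum, hsum1]
      have : θ^2/2 * ∑ i ∈ Finset.range n, p i * (t n / lam n i)^2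
          ≤ θ^2/2 * (n * L₂^2) := by
        apply mul_le_mul_of_nonneg_left hsum2 (by positivity)
      linarith
    -- assemble
    have hts : t n * s n = r n + δ n * s n := by
      rw [ht n]; field_simp
    have hfinal : Real.exp (-(-θ) * r n) *
        Real.exp (-θ * (t n * s n) + θ^2/2 * (n * L₂^2))
        ≤ Real.exp (-(c * n * (δ n)^2)) := by
      rw [← Real.exp_add]
      apply Real.exp_le_exp.2
      have h1 : -(-θ) * r n + (-θ * (t n * s n) + θ^2/2 * (n * L₂^2))
          = -θ * (δ n * s n) + θ^2/2 * (n * L₂^2) := by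
        rw [hts]; ring
      rw [h1]
      have h2 : -θ * (δ n * s n) ≤ -θ * (δ n * (α * n)) := by
        have h0 : δ n * (α * n) ≤ δ n * s n := mul_le_mul_of_nonneg_left hs₁ hδ0
        have h0' := mul_le_mul_of_nonneg_left h0 hθ0
        linarith
      have h3 : -θ * (δ n * (α * n)) + θ^2/2 * (n * L₂^2) = -(c * n * (δ n)^2) := by
        rw [hθ_def, hc_def]
        field_simp
        ring
      linarith
    refine ⟨?_, hδ0, hδn.1⟩
    calc (P {ω | X n ω ≤ r n}).toReal
        ≤ Real.exp (-(-θ) * r n) * mgf (X n) P (-θ) := hcher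
      _ ≤ Real.exp (-(-θ) * r n) *
          Real.exp (-θ * (t n * s n) + θ^2/2 * (n * L₂^2)) := by
          apply mul_le_mul_of_nonneg_left _ (Real.exp_pos _).le
          exact hprod_le.trans (Real.exp_le_exp.2 hsum_le)
      _ ≤ Real.exp (-(c * n * (δ n)^2)) := hfinal
  constructor
  · refine ⟨c, hcpos, ?_⟩
    filter_upwards [key] with n hkey
    refine le_trans ?_ hkey.1
    apply ENNReal.toReal_mono (measure_ne_top P _)
    apply measure_mono
    intro ω hω
    simp only [Set.mem_setOf_eq] at *
    have := sq_nonneg (δ n)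
    linarith
  · apply squeeze_zero'
    · filter_upwards with n
      positivity
    · filter_upwards [key, eventually_ge_atTop 1] with n hkey hn
      show (n:ℝ) * (P {ω | X n ω < r n}).toReal
        ≤ (n:ℝ) * Real.exp (-(c * c₅^2) * (Real.log n)^2)
      have hn1 : (1:ℝ) ≤ (n:ℝ) := by exact_mod_cast hn
      have hnpos : (0:ℝ) < n := by linarith
      have hsqrt : 0 < Real.sqrt n := Real.sqrt_pos.2 hnpos
      have hP : (P {ω | X n ω < r n}).toReal ≤ Real.exp (-(c * n * (δ n)^2)) := by
        refine le_trans ?_ hkey.1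
        apply ENNReal.toReal_mono (measure_ne_top P _)
        apply measure_mono
        intro ω hω
        simp only [Set.mem_setOf_eq] at *
        exact hω.le
      have hδsq : c₅^2 * (Real.log n)^2 ≤ (n:ℝ) * (δ n)^2 := by
        have h1 : c₅ * Real.log n / Real.sqrt n ≤ δ n := hkey.2.2
        have h2 : 0 ≤ c₅ * Real.log n / Real.sqrt n := by positivity
        have h3 : (c₅ * Real.log n / Real.sqrt n)^2 ≤ (δ n)^2 := by
          apply pow_le_pow_left₀ h2 h1
        have h4 : (c₅ * Real.log n / Real.sqrt n)^2 = c₅^2 * (Real.log n)^2 / n := by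
          rw [div_pow, mul_pow, Real.sq_sqrt hnpos.le]
        calc c₅^2 * (Real.log n)^2 = (n:ℝ) * (c₅^2 * (Real.log n)^2 / n) := by
              field_simp
          _ ≤ (n:ℝ) * (δ n)^2 := by
              rw [← h4]
              exact mul_le_mul_of_nonneg_left h3 hnpos.le
      have hexp : Real.exp (-(c * n * (δ n)^2)) ≤ Real.exp (-(c * c₅^2) * (Real.log n)^2) := by
        apply Real.exp_le_exp.2
        have := mul_le_mul_of_nonneg_left hδsq hcpos.le
        linarith
      calc (n:ℝ) * (P {ω | X n ω < r n}).toReal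
          ≤ (n:ℝ) * Real.exp (-(c * n * (δ n)^2)) := by
            apply mul_le_mul_of_nonneg_left hP hnpos.le
        _ ≤ (n:ℝ) * Real.exp (-(c * c₅^2) * (Real.log n)^2) := by
            apply mul_le_mul_of_nonneg_left hexp hnpos.le
    · -- n * exp(-K (log n)^2) → 0
      have hK : 0 < c * c₅^2 := by positivity
      have hlog : Tendsto (fun n : ℕ => Real.log n) atTop atTop :=
        Real.tendsto_log_atTop.comp tendsto_natCast_atTop_atTop
      have hpoly : Tendsto (fun x : ℝ => x - (c * c₅^2) * x^2) atTop atBot := by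
        apply tendsto_atBot_mono' atTop ?_ tendsto_neg_atTop_atBot
        filter_upwards [eventually_ge_atTop (2/(c*c₅^2)), eventually_ge_atTop (0:ℝ)]
          with x hx hx0
        have h1 : 2 ≤ x * (c * c₅^2) := (div_le_iff₀ hK).1 hx
        show x - (c * c₅^2) * x^2 ≤ -x
        nlinarith
      have hg : Tendsto (fun n : ℕ =>
          Real.exp (Real.log n - (c * c₅^2) * (Real.log n)^2)) atTop (nhds 0) :=
        Real.tendsto_exp_atBot.comp (hpoly.comp hlog)
      apply hg.congr'
      filter_upwards [eventually_ge_atTop 1] with n hn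
      have hnpos : (0:ℝ) < n := by exact_mod_cast hn
      rw [sub_eq_add_neg, Real.exp_add, Real.exp_log hnpos, neg_mul]
end
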